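/- Let I be an EI-category and C : I → Cat a functor such that C(i) is an EI-category for every object i, and such that for every automorphism u : i ≅ i in I, the map on isomorphism classes of objects of C(i) induced by C(u) is the identity. Then the Grothendieck construction ∫ C is an EI-category, i.e., every endomorphism in ∫ C is an isomorphism. -/

import Mathlib

open CategoryTheory

universe v u v₂ u₂

/-- An *EI-category* is a category in which every endomorphism is an isomorphism. -/
def IsEICategory (Γ : Type u) [Category.{v} Γ] : Prop :=
  ∀ (x : Γ) (f : x ⟶ x), IsIso f

/-- A morphism in a Grothendieck construction whose base and fiber components are
isomorphisms is itself an isomorphism. -/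
theorem Grothendieck.isIso_of_isIso {I : Type u} [Category.{v} I]
    {C : I ⥤ Cat.{v₂, u₂}} {X Y : Grothendieck C} (f : X ⟶ Y)
    (hb : IsIso f.base) (hf : IsIso f.fiber) : IsIso f := by
  refine ⟨⟨Grothendieck.Hom.mk (inv f.base)
    ((C.map (inv f.base)).toFunctor.map (inv f.fiber) ≫
      eqToHom (by rw [← Cat.Hom.comp_obj, ← C.map_comp, IsIso.hom_inv_id, C.map_id]; rfl)), ?_, ?_⟩⟩
  · refine Grothendieck.ext _ _ ?_ ?_ <;>
      simp [Grothendieck.comp, Grothendieck.id, eqToHom_map]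
    exact (fun {D : Type u₂} [Category.{v₂} D] {a b c d : D} (p : a = b) (q : b = c) (r : c = d) (s : a = d) => by subst p q r; simp :
      ∀ {D : Type u₂} [Category.{v₂} D] {a b c d : D} (p : a = b) (q : b = c) (r : c = d) (s : a = d), eqToHom p ≫ eqToHom q ≫ eqToHom r = eqToHom s) _ _ _ _
  · refine Grothendieck.ext _ _ (by simp [Grothendieck.comp, Grothendieck.id]) ?_
    have h : C.map (inv f.base) ≫ C.map f.base = 𝟙 (C.obj Y.base) := by
        rw [← C.map_comp, IsIso.inv_hom_id, C.map_id]
    have h' := Functor.congr_hom (congrArg Cat.Hom.toFunctor h) f.fiber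
    simp only [Grothendieck.comp_fiber, Grothendieck.id_fiber, Functor.map_comp, eqToHom_map,
      Category.assoc, Functor.map_inv, Cat.Hom.comp_toFunctor, Cat.Hom.id_toFunctor, Functor.comp_map, Functor.id_map] at h' ⊢
    simp only [h']
    simp
    exact (fun {D : Type u₂} [Category.{v₂} D] {a b c d : D} (p : a = b) (q : b = c) (r : c = d) (s : a = d) => by subst p q r; simp :
      ∀ {D : Type u₂} [Category.{v₂} D] {a b c d : D} (p : a = b) (q : b = c) (r : c = d) (s : a = d), eqToHom p ≫ eqToHom q ≫ eqToHom r = eqToHom s) _ _ _ _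

/-- If `I` is an EI-category and `C : I ⥤ Cat` is a functor such that every `C(i)` is an
EI-category, and such that for every automorphism `u : i ≅ i` in `I` the induced map on
isomorphism classes of objects of `C(i)` is the identity, then the Grothendieck
construction `∫ C` is an EI-category. -/
theorem isEICategory_grothendieck {I : Type u} [Category.{v} I]
    (C : I ⥤ Cat.{v₂, u₂}) (hI : IsEICategory I)
    (hC : ∀ i : I, IsEICategory (C.obj i))
    (hiso : ∀ (i : I) (u : i ⟶ i), IsIso u →
      ∀ x : C.obj i, Nonempty ((C.map u).toFunctor.obj x ≅ x)) :
    IsEICategory (Grothendieck C) := by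
  intro X f
  have hb : IsIso f.base := hI _ f.base
  obtain ⟨e⟩ := hiso X.base f.base hb X.fiber
  have hf : IsIso f.fiber := by
    have : IsIso (e.inv ≫ f.fiber) := hC X.base _ _
    have : f.fiber = e.hom ≫ (e.inv ≫ f.fiber) := by simp
    rw [this]; infer_instance
  exact Grothendieck.isIso_of_isIso f hb hf
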